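/- arXiv:1912.05177 — 4 statements merged into one kernel-verified Lean document; each statement's English description precedes it below -/
import Mathlib

section
/- The function γ : ℝ^d → ℝ that sends θ to the maximum of the real parts of the complex eigenvalues of K(θ) is a convex function on ℝ^d. -/
set_option maxHeartbeats 1000000

open Matrix Filter
open scoped Topology

attribute [local instance] Matrix.linftyOpNormedRing Matrix.linftyOpNormedAlgebra

local instance (m : ℕ) : CompleteSpace (Matrix (Fin m) (Fin m) ℂ) :=
  (by infer_instance : CompleteSpace (Fin m → Fin m → ℂ))

private lemma cw_bound {m : ℕ} (B : Matrix (Fin m) (Fin m) ℝ)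
    (hoff : ∀ i j, i ≠ j → 0 ≤ B i j) (x : Fin m → ℝ) (hx : ∀ i, 0 < x i)
    (r : ℝ) (hr : ∀ i, ∑ j, B i j * x j ≤ r * x i)
    {μ : ℂ} (hμ : μ ∈ spectrum ℂ (B.map Complex.ofReal)) : μ.re ≤ r := by
  classical
  have hdet : (μ • (1 : Matrix (Fin m) (Fin m) ℂ) - B.map Complex.ofReal).det = 0 := by
    rw [spectrum.mem_iff, Algebra.algebraMap_eq_smul_one] at hμ
    by_contra h
    exact hμ ((Matrix.isUnit_iff_isUnit_det _).mpr (isUnit_iff_ne_zero.mpr h))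
  obtain ⟨y, hy0, hy⟩ := (Matrix.exists_mulVec_eq_zero_iff).mpr hdet
  have hv : (B.map Complex.ofReal) *ᵥ y = μ • y := by
    have := hy
    rw [Matrix.sub_mulVec, sub_eq_zero, Matrix.smul_mulVec, Matrix.one_mulVec] at this
    exact this.symm
  have heig : ∀ i, ∑ j, (B i j : ℂ) * y j = μ * y i := by
    intro i
    have h := congrFun hv i
    simpa [Matrix.mulVec, dotProduct, Matrix.map_apply] using h
  set c : ℝ := ∑ j, |B j j| with hc_def
  have hc0 : 0 ≤ c := Finset.sum_nonneg fun j _ => abs_nonneg _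
  have hcj : ∀ j, |B j j| ≤ c := fun j =>
    Finset.single_le_sum (f := fun j => |B j j|) (fun j _ => abs_nonneg _) (Finset.mem_univ j)
  have hcoef : ∀ i j, 0 ≤ B i j + if i = j then c else 0 := by
    intro i j
    by_cases h : i = j
    · subst h; rw [if_pos rfl]; linarith [hcj i, neg_abs_le (B i i)]
    · rw [if_neg h, add_zero]; exact hoff i j h
  obtain ⟨j₀, hj₀⟩ : ∃ j, y j ≠ 0 := Function.ne_iff.mp hy0
  obtain ⟨i, -, hi⟩ := Finset.exists_max_image Finset.univ (fun j => ‖y j‖ / x j)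
    ⟨j₀, Finset.mem_univ j₀⟩
  set t : ℝ := ‖y i‖ / x i with ht_def
  have ht : 0 < t := lt_of_lt_of_le (div_pos (by simpa using hj₀) (hx j₀)) (hi j₀ (Finset.mem_univ j₀))
  have hbound : ∀ j, ‖y j‖ ≤ t * x j := fun j => by
    have h := hi j (Finset.mem_univ j)
    rw [div_le_iff₀ (hx j)] at h
    linarith
  have hyi : ‖y i‖ = t * x i := by
    rw [ht_def, div_mul_cancel₀ _ (hx i).ne']
  have h1 : (μ + (c : ℂ)) * y i = ∑ j, ((B i j + if i = j then c else 0 : ℝ) : ℂ) * y j := by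
    have hterm : ∀ j, ((B i j + if i = j then c else 0 : ℝ) : ℂ) * y j
        = (B i j : ℂ) * y j + (if i = j then (c : ℂ) * y j else 0) := by
      intro j; split_ifs with h <;> push_cast <;> ring
    rw [Finset.sum_congr rfl fun j _ => hterm j, Finset.sum_add_distrib, heig i,
      Finset.sum_ite_eq]
    simp
    ring
  have key : ‖μ + (c : ℂ)‖ * (t * x i) ≤ (r + c) * (t * x i) := by
    calc ‖μ + (c : ℂ)‖ * (t * x i)
        = ‖(μ + (c : ℂ)) * y i‖ := by rw [norm_mul, hyi]
      _ = ‖∑ j, ((B i j + if i = j then c else 0 : ℝ) : ℂ) * y j‖ := by rw [h1]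
      _ ≤ ∑ j, (B i j + if i = j then c else 0) * ‖y j‖ := by
          refine le_trans (norm_sum_le _ _) (le_of_eq (Finset.sum_congr rfl fun j _ => ?_))
          rw [norm_mul, Complex.norm_real, Real.norm_eq_abs, abs_of_nonneg (hcoef i j)]
      _ ≤ ∑ j, (B i j + if i = j then c else 0) * (t * x j) :=
          Finset.sum_le_sum fun j _ => mul_le_mul_of_nonneg_left (hbound j) (hcoef i j)
      _ = (∑ j, B i j * x j) * t + c * (x i * t) := by
          rw [Finset.sum_congr rfl (fun j _ => add_mul (B i j) _ (t * x j)),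
            Finset.sum_add_distrib]
          congr 1
          · rw [Finset.sum_mul]; exact Finset.sum_congr rfl fun j _ => by ring
          · simp only [ite_mul, zero_mul, Finset.sum_ite_eq, Finset.mem_univ, if_pos]
            ring
      _ ≤ (r + c) * (t * x i) := by
          nlinarith [mul_le_mul_of_nonneg_right (hr i) ht.le, hx i, ht.le]
  have habs : ‖μ + (c : ℂ)‖ ≤ r + c :=
    le_of_mul_le_mul_right key (mul_pos ht (hx i))
  have hre := Complex.re_le_norm (μ + (c : ℂ))
  simp only [Complex.add_re, Complex.ofReal_re] at hre
  linarith

private lemma pow_entry_nonneg {m : ℕ} {A : Matrix (Fin m) (Fin m) ℝ} (h : ∀ i j, 0 ≤ A i j) :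
    ∀ (n : ℕ) (i j : Fin m), 0 ≤ (A ^ n) i j := by
  intro n
  induction n with
  | zero =>
    intro i j; rw [pow_zero]
    by_cases hij : i = j <;> simp [Matrix.one_apply, hij]
  | succ k ih =>
    intro i j
    rw [pow_succ, Matrix.mul_apply]
    exact Finset.sum_nonneg fun l _ => mul_nonneg (ih i l) (h l j)

private lemma exists_supersolution {m : ℕ} [NeZero m] (M : Matrix (Fin m) (Fin m) ℝ)
    (hoff : ∀ i j, i ≠ j → 0 ≤ M i j) (g ε : ℝ) (hε : 0 < ε)
    (hspec : ∀ μ ∈ spectrum ℂ (M.map Complex.ofReal), μ.re ≤ g) :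
    ∃ u : Fin m → ℝ, (∀ i, 0 < u i) ∧ ∀ i, ∑ j, M i j * u j ≤ (g + ε) * u i := by
  classical
  set Mc : Matrix (Fin m) (Fin m) ℂ := M.map Complex.ofReal with hMc_def
  set R : ℝ := ‖Mc‖ with hR_def
  have hR0 : 0 ≤ R := norm_nonneg _
  -- entry bound
  have hent : ∀ i j, |M i j| ≤ R := by
    intro i j
    have h1 : ‖Mc i j‖₊ ≤ ‖Mc‖₊ := by
      rw [Matrix.linfty_opNNNorm_def]
      exact le_trans (Finset.single_le_sum (f := fun l => ‖Mc i l‖₊) (fun l _ => by positivity) (Finset.mem_univ j))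
        (Finset.le_sup (f := fun i => ∑ j, ‖Mc i j‖₊) (Finset.mem_univ i))
    have h2 : ‖Mc i j‖ ≤ ‖Mc‖ := h1
    simpa [hMc_def, Matrix.map_apply, Complex.norm_real] using h2
  -- g is not too negative
  have hgR : -R ≤ g := by
    obtain ⟨μ₀, hμ₀⟩ := spectrum.nonempty Mc
    have h1 : ‖μ₀‖ ≤ R := spectrum.norm_le_norm_of_mem hμ₀
    have h2 := hspec μ₀ hμ₀
    have h3 : |μ₀.re| ≤ ‖μ₀‖ := Complex.abs_re_le_norm μ₀
    have := neg_abs_le μ₀.re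
    linarith
  set δ : ℝ := ε / 2 with hδ_def
  have hδ : 0 < δ := by positivity
  set c : ℝ := R + 1 + R ^ 2 / δ with hc_def
  have hcR : R + 1 ≤ c := by
    rw [hc_def]
    have : 0 ≤ R ^ 2 / δ := by positivity
    linarith
  set ρ : ℝ := g + c + ε with hρ_def
  have hρ1 : 1 ≤ ρ := by
    rw [hρ_def, hc_def]
    have : 0 ≤ R ^ 2 / δ := by positivity
    linarith
  have hρ0 : 0 < ρ := by linarith
  -- the shifted matrix
  set A : Matrix (Fin m) (Fin m) ℝ := M + c • 1 with hA_def
  set Ac : Matrix (Fin m) (Fin m) ℂ := A.map Complex.ofReal with hAc_def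
  have hAcd : Ac = Mc + (c : ℂ) • 1 := by
    ext i j
    by_cases hij : i = j <;>
      simp [hAc_def, hA_def, hMc_def, Matrix.map_apply, Matrix.one_apply, hij]
  -- spectrum shift
  have hshift : ∀ ν ∈ spectrum ℂ Ac, (ν - c) ∈ spectrum ℂ Mc := by
    intro ν hν
    rw [spectrum.mem_iff] at hν ⊢
    intro hu
    apply hν
    rw [hAcd]
    have heq : algebraMap ℂ (Matrix (Fin m) (Fin m) ℂ) ν - (Mc + (c : ℂ) • 1)
        = algebraMap ℂ (Matrix (Fin m) (Fin m) ℂ) (ν - (c : ℂ)) - Mc := by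
      rw [Algebra.algebraMap_eq_smul_one, Algebra.algebraMap_eq_smul_one, sub_smul]
      abel
    rw [heq]
    exact hu
  -- norm bound on spectrum of Ac
  have hmemb : ∀ ν ∈ spectrum ℂ Ac, ‖ν‖ ≤ g + c + δ := by
    intro ν hν
    have hmem := hshift ν hν
    set μ : ℂ := ν - c with hμ_def
    have hre : μ.re ≤ g := hspec μ hmem
    have him : |μ.im| ≤ R := by
      have h1 : ‖μ‖ ≤ R := spectrum.norm_le_norm_of_mem hmem
      have h2 : |μ.im| ≤ ‖μ‖ := Complex.abs_im_le_norm μ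
      linarith
    have hμre : -R ≤ μ.re := by
      have h1 : ‖μ‖ ≤ R := spectrum.norm_le_norm_of_mem hmem
      have h3 : |μ.re| ≤ ‖μ‖ := Complex.abs_re_le_norm μ
      have := neg_abs_le μ.re
      linarith
    have hν_eq : ν = μ + (c : ℂ) := by rw [hμ_def]; ring
    have hsq : ‖ν‖ ^ 2 ≤ (μ.re + c + δ) ^ 2 := by
      rw [hν_eq, Complex.sq_norm, Complex.normSq_apply]
      simp only [Complex.add_re, Complex.add_im, Complex.ofReal_re, Complex.ofReal_im, add_zero]
      have hkey : μ.im * μ.im ≤ 2 * (μ.re + c) * δ := by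
        have h1 : R ^ 2 / δ ≤ μ.re + c := by rw [hc_def]; linarith
        have h2 : R ^ 2 ≤ (μ.re + c) * δ := by
          rw [div_le_iff₀ hδ] at h1; linarith
        have h0 : μ.im * μ.im ≤ R ^ 2 := by
          nlinarith [mul_self_le_mul_self (abs_nonneg μ.im) him, abs_mul_abs_self μ.im]
        nlinarith [h0, h2, sq_nonneg R]
      nlinarith [hkey, sq_nonneg δ]
    have hpos : 0 ≤ μ.re + c + δ := by linarith
    have := le_of_pow_le_pow_left₀ (by norm_num : (2:ℕ) ≠ 0) hpos hsq
    linarith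
  -- spectral radius bound
  have hsr : spectralRadius ℂ Ac < ENNReal.ofReal ρ := by
    have h1 : spectralRadius ℂ Ac ≤ ENNReal.ofReal (g + c + δ) := by
      rw [spectralRadius]
      refine iSup₂_le fun ν hν => ?_
      rw [show ((‖ν‖₊ : NNReal) : ENNReal) = ENNReal.ofReal ‖ν‖ from (ofReal_norm ν).symm]
      exact ENNReal.ofReal_le_ofReal (hmemb ν hν)
    refine lt_of_le_of_lt h1 ((ENNReal.ofReal_lt_ofReal_iff hρ0).mpr ?_)
    simp only [hρ_def, hδ_def]
    linarith
  -- Gelfand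
  obtain ⟨n, hn1, hnorm⟩ : ∃ n : ℕ, 1 ≤ n ∧ (‖Ac ^ n‖₊ : ENNReal) ^ (1 / (n : ℝ)) < ENNReal.ofReal ρ := by
    have hg := spectrum.pow_nnnorm_pow_one_div_tendsto_nhds_spectralRadius Ac
    have hev := hg.eventually_lt_const hsr
    obtain ⟨n, h1, h2⟩ := ((eventually_ge_atTop 1).and hev).exists
    exact ⟨n, h1, h2⟩
  have hn0 : (n : ℝ) ≠ 0 := by positivity
  have hAn : ‖Ac ^ n‖ ≤ ρ ^ n := by
    have hx : (‖Ac ^ n‖₊ : ENNReal) ≤ ENNReal.ofReal (ρ ^ n) := by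
      calc (‖Ac ^ n‖₊ : ENNReal)
          = ((‖Ac ^ n‖₊ : ENNReal) ^ (1 / (n : ℝ))) ^ (n : ℝ) := by
            rw [← ENNReal.rpow_mul, one_div, inv_mul_cancel₀ hn0, ENNReal.rpow_one]
        _ ≤ (ENNReal.ofReal ρ) ^ (n : ℝ) :=
            ENNReal.rpow_le_rpow hnorm.le (by positivity)
        _ = ENNReal.ofReal (ρ ^ n) := by
            rw [ENNReal.rpow_natCast, ← ENNReal.ofReal_pow hρ0.le]
    have h5 := ENNReal.toReal_mono ENNReal.ofReal_ne_top hx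
    rw [ENNReal.toReal_ofReal (by positivity), ENNReal.coe_toReal] at h5
    exact_mod_cast h5
  -- A is entrywise nonnegative
  have hA_entry : ∀ i j, A i j = M i j + if i = j then c else 0 := by
    intro i j
    by_cases hij : i = j <;> simp [hA_def, Matrix.one_apply, hij]
  have hA_nonneg : ∀ i j, 0 ≤ A i j := by
    intro i j
    rw [hA_entry]
    by_cases hij : i = j
    · rw [if_pos hij]
      have := hent i j
      have := neg_abs_le (M i j)
      linarith
    · rw [if_neg hij, add_zero]; exact hoff i j hij
  have hApow := pow_entry_nonneg hA_nonneg
  -- powers commute with map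
  have hmap_pow : ∀ k : ℕ, Ac ^ k = (A ^ k).map Complex.ofReal := by
    intro k
    induction k with
    | zero =>
      ext i j
      by_cases hij : i = j <;> simp [Matrix.one_apply, Matrix.map_apply, hij]
    | succ k ih =>
      rw [pow_succ, pow_succ, ih]
      ext i j
      simp only [Matrix.mul_apply, Matrix.map_apply, hAc_def]
      push_cast
      rfl
  -- row sums of A^n bounded
  have hrow : ∀ i, ∑ j, (A ^ n) i j ≤ ρ ^ n := by
    intro i
    have h1 : ∑ j, ‖(Ac ^ n) i j‖₊ ≤ ‖Ac ^ n‖₊ := by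
      rw [Matrix.linfty_opNNNorm_def]
      exact Finset.le_sup (f := fun i => ∑ j, ‖(Ac ^ n) i j‖₊) (Finset.mem_univ i)
    have h2 : ∑ j, ‖(Ac ^ n) i j‖ ≤ ‖Ac ^ n‖ := by
      have := NNReal.coe_le_coe.mpr h1
      push_cast at this
      simpa using this
    have h3 : ∀ j, ‖(Ac ^ n) i j‖ = (A ^ n) i j := by
      intro j
      rw [hmap_pow n, Matrix.map_apply, Complex.norm_real, Real.norm_eq_abs,
        abs_of_nonneg (hApow n i j)]
    calc ∑ j, (A ^ n) i j = ∑ j, ‖(Ac ^ n) i j‖ := by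
          exact Finset.sum_congr rfl fun j _ => (h3 j).symm
      _ ≤ ‖Ac ^ n‖ := h2
      _ ≤ ρ ^ n := hAn
  -- define the supersolution
  set u : Fin m → ℝ := fun jj => ∑ k ∈ Finset.range n, (∑ l, (A ^ k) jj l) * (ρ ^ k)⁻¹ with hu_def
  have hu_pos : ∀ jj, 0 < u jj := by
    intro jj
    refine Finset.sum_pos' (fun k _ => mul_nonneg (Finset.sum_nonneg fun l _ => hApow k jj l)
      (by positivity)) ⟨0, Finset.mem_range.mpr (by omega), ?_⟩
    simp [Matrix.one_apply]
  refine ⟨u, hu_pos, fun i => ?_⟩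
  set S : ℕ → ℝ := fun k => ∑ l, (A ^ k) i l with hS_def
  have hS0 : S 0 = 1 := by simp [hS_def, Matrix.one_apply]
  have hSn : S n ≤ ρ ^ n := hrow i
  have hSnn : ∀ k, 0 ≤ S k := fun k => Finset.sum_nonneg fun l _ => hApow k i l
  have hui : u i = ∑ k ∈ Finset.range n, S k * (ρ ^ k)⁻¹ := rfl
  -- step 1: A-action on u
  have hAu : ∑ j, A i j * u j = ∑ k ∈ Finset.range n, S (k + 1) * (ρ ^ k)⁻¹ := by
    calc ∑ j, A i j * u j
        = ∑ j, ∑ k ∈ Finset.range n, A i j * ((∑ l, (A ^ k) j l) * (ρ ^ k)⁻¹) := by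
          exact Finset.sum_congr rfl fun j _ => by rw [hu_def, Finset.mul_sum]
      _ = ∑ k ∈ Finset.range n, ∑ j, A i j * ((∑ l, (A ^ k) j l) * (ρ ^ k)⁻¹) :=
          Finset.sum_comm
      _ = ∑ k ∈ Finset.range n, S (k + 1) * (ρ ^ k)⁻¹ := by
          refine Finset.sum_congr rfl fun k _ => ?_
          have hkey : S (k + 1) = ∑ j, A i j * (∑ l, (A ^ k) j l) := by
            simp only [hS_def, pow_succ']
            simp only [Matrix.mul_apply]
            rw [Finset.sum_comm]
            exact Finset.sum_congr rfl fun j _ => by rw [Finset.mul_sum]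
          rw [hkey, Finset.sum_mul]
          exact Finset.sum_congr rfl fun j _ => by ring
  -- step 2: telescoping bound
  have htel : ∑ k ∈ Finset.range n, S (k + 1) * (ρ ^ k)⁻¹ ≤ ρ * u i := by
    have hfact : ∀ k : ℕ, S (k + 1) * (ρ ^ k)⁻¹ = ρ * (S (k + 1) * (ρ ^ (k + 1))⁻¹) := by
      intro k
      rw [pow_succ, mul_inv]
      field_simp
    rw [Finset.sum_congr rfl fun k _ => hfact k, ← Finset.mul_sum]
    have h1 := Finset.sum_range_succ' (fun k => S k * (ρ ^ k)⁻¹) n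
    have h2 := Finset.sum_range_succ (fun k => S k * (ρ ^ k)⁻¹) n
    have h3 : ∑ k ∈ Finset.range n, S (k + 1) * (ρ ^ (k + 1))⁻¹
        = u i + S n * (ρ ^ n)⁻¹ - S 0 * (ρ ^ 0)⁻¹ := by
      rw [hui]; rw [h2] at h1; linarith [h1]
    rw [h3, hS0]
    simp only [pow_zero, inv_one, mul_one, one_mul]
    have h4 : S n * (ρ ^ n)⁻¹ ≤ 1 := by
      rw [← div_eq_mul_inv, div_le_one (by positivity)]
      exact hSn
    have h6 : u i + S n * (ρ ^ n)⁻¹ - 1 ≤ u i := by linarith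
    exact mul_le_mul_of_nonneg_left h6 hρ0.le
  -- conclude
  have hfin : ∑ j, A i j * u j ≤ ρ * u i := hAu ▸ htel
  have hsplit : ∑ j, A i j * u j = ∑ j, M i j * u j + c * u i := by
    rw [Finset.sum_congr rfl fun j _ => by rw [hA_entry i j, add_mul]]
    rw [Finset.sum_add_distrib]
    congr 1
    simp only [ite_mul, zero_mul, Finset.sum_ite_eq, Finset.mem_univ, if_pos]
  have hfinal : ∑ j, M i j * u j = (∑ j, A i j * u j) - c * u i := by rw [hsplit]; ring
  have hrc : ρ - c = g + ε := by rw [hρ_def]; ring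
  have h7 : (g + ε) * u i = ρ * u i - c * u i := by rw [← hrc]; ring
  rw [hfinal, h7]
  linarith [hfin]


/-- The Perron–Frobenius eigenvalue `γ θ`, i.e. the maximum of the real parts of
the complex eigenvalues of `K(θ) = diag(∑ k, θ k * v k) + Q`, is a convex function on `ℝ^d`. -/
theorem gamma_convex (m d : ℕ) (hm : 2 ≤ m) (hd : 2 ≤ d)
    (Q : Matrix (Fin m) (Fin m) ℝ)
    (hQoff : ∀ i j, i ≠ j → 0 ≤ Q i j)
    (hQrow : ∀ i, ∑ j, Q i j = 0)
    (hQirr : ∀ i j : Fin m, i ≠ j → ∃ n : ℕ, ∃ c : Fin (n + 1) → Fin m,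
      c 0 = i ∧ c (Fin.last n) = j ∧ ∀ r : Fin n, 0 < Q (c r.castSucc) (c r.succ))
    (v : Fin d → Fin m → ℝ)
    (γ : (Fin d → ℝ) → ℝ)
    (hγ : ∀ θ : Fin d → ℝ, IsGreatest
      (Complex.re '' spectrum ℂ
        ((Matrix.diagonal (fun i => ∑ k, θ k * v k i) + Q).map Complex.ofReal))
      (γ θ)) :
    ConvexOn ℝ Set.univ γ := by
  haveI : NeZero m := ⟨by omega⟩
  classical
  refine ⟨convex_univ, ?_⟩
  intro θ₁ _ θ₂ _ a b ha hb hab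
  simp only [smul_eq_mul]
  rcases eq_or_lt_of_le ha with ha0 | ha'
  · have hb1 : b = 1 := by linarith
    subst hb1
    rw [← ha0]
    simp
  rcases eq_or_lt_of_le hb with hb0 | hb'
  · have ha1 : a = 1 := by linarith
    subst ha1
    rw [← hb0]
    simp
  -- main case: 0 < a, 0 < b
  set θ : Fin d → ℝ := a • θ₁ + b • θ₂ with hθ_def
  apply le_of_forall_pos_le_add
  intro ε hε
  -- diagonal entries hypothesis for the three matrices
  have hoffgen : ∀ (f : Fin m → ℝ) (i j : Fin m), i ≠ j →
      0 ≤ (Matrix.diagonal f + Q) i j := by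
    intro f i j hij
    rw [Matrix.add_apply, Matrix.diagonal_apply_ne _ hij, zero_add]
    exact hQoff i j hij
  have hspec : ∀ θ' : Fin d → ℝ, ∀ μ ∈ spectrum ℂ
      ((Matrix.diagonal (fun i => ∑ k, θ' k * v k i) + Q).map Complex.ofReal), μ.re ≤ γ θ' :=
    fun θ' μ hμ => (hγ θ').2 ⟨μ, hμ, rfl⟩
  obtain ⟨u, hu_pos, hu⟩ := exists_supersolution
    (Matrix.diagonal (fun i => ∑ k, θ₁ k * v k i) + Q) (hoffgen _) (γ θ₁) ε hε (hspec θ₁)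
  obtain ⟨w, hw_pos, hw⟩ := exists_supersolution
    (Matrix.diagonal (fun i => ∑ k, θ₂ k * v k i) + Q) (hoffgen _) (γ θ₂) ε hε (hspec θ₂)
  set x : Fin m → ℝ := fun i => u i ^ a * w i ^ b with hx_def
  have hx_pos : ∀ i, 0 < x i := fun i =>
    mul_pos (Real.rpow_pos_of_pos (hu_pos i) a) (Real.rpow_pos_of_pos (hw_pos i) b)
  -- AM-GM
  have hAMGM : ∀ i j, x j ≤ x i * (a * (u j / u i) + b * (w j / w i)) := by
    intro i j
    have h1 : (u j / u i) ^ a * (w j / w i) ^ b ≤ a * (u j / u i) + b * (w j / w i) :=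
      Real.geom_mean_le_arith_mean2_weighted ha'.le hb'.le
        (div_nonneg (hu_pos j).le (hu_pos i).le) (div_nonneg (hw_pos j).le (hw_pos i).le) hab
    have h2 : x j = x i * ((u j / u i) ^ a * (w j / w i) ^ b) := by
      rw [hx_def]
      simp only
      rw [Real.div_rpow (hu_pos j).le (hu_pos i).le, Real.div_rpow (hw_pos j).le (hw_pos i).le]
      have h3 := (Real.rpow_pos_of_pos (hu_pos i) a).ne'
      have h4 := (Real.rpow_pos_of_pos (hw_pos i) b).ne'
      field_simp
      try ring
    rw [h2]
    exact mul_le_mul_of_nonneg_left h1 (hx_pos i).le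
  -- row sum decomposition
  have hsum : ∀ (f : Fin m → ℝ) (z : Fin m → ℝ) (i : Fin m),
      ∑ j, (Matrix.diagonal f + Q) i j * z j
        = (f i + Q i i) * z i + ∑ j ∈ Finset.univ.erase i, Q i j * z j := by
    intro f z i
    rw [← Finset.add_sum_erase _ _ (Finset.mem_univ i)]
    congr 1
    · rw [Matrix.add_apply, Matrix.diagonal_apply_eq]
    · refine Finset.sum_congr rfl fun j hj => ?_
      rw [Matrix.add_apply, Matrix.diagonal_apply_ne _ (Ne.symm (Finset.mem_erase.mp hj).1),
        zero_add]
  set r : ℝ := a * (γ θ₁ + ε) + b * (γ θ₂ + ε) with hr_def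
  -- key row bound for the combined matrix
  have hrow : ∀ i, ∑ j, (Matrix.diagonal (fun i => ∑ k, θ k * v k i) + Q) i j * x j
      ≤ r * x i := by
    intro i
    have hu_e : ∑ j ∈ Finset.univ.erase i, Q i j * u j
        ≤ (γ θ₁ + ε - (∑ k, θ₁ k * v k i) - Q i i) * u i := by
      have h1 := hu i
      rw [hsum (fun i => ∑ k, θ₁ k * v k i) u i] at h1
      linarith
    have hw_e : ∑ j ∈ Finset.univ.erase i, Q i j * w j
        ≤ (γ θ₂ + ε - (∑ k, θ₂ k * v k i) - Q i i) * w i := by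
      have h1 := hw i
      rw [hsum (fun i => ∑ k, θ₂ k * v k i) w i] at h1
      linarith
    have hterm : ∀ j ∈ Finset.univ.erase i, Q i j * x j
        ≤ (a * x i / u i) * (Q i j * u j) + (b * x i / w i) * (Q i j * w j) := by
      intro j hj
      have hQ : 0 ≤ Q i j := hQoff i j (Ne.symm (Finset.mem_erase.mp hj).1)
      calc Q i j * x j ≤ Q i j * (x i * (a * (u j / u i) + b * (w j / w i))) :=
            mul_le_mul_of_nonneg_left (hAMGM i j) hQ
        _ = (a * x i / u i) * (Q i j * u j) + (b * x i / w i) * (Q i j * w j) := by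
            have h3 := (hu_pos i).ne'
            have h4 := (hw_pos i).ne'
            field_simp
            try ring
    have hE := Finset.sum_le_sum hterm
    rw [Finset.sum_add_distrib, ← Finset.mul_sum, ← Finset.mul_sum] at hE
    have hE2 : (a * x i / u i) * (∑ j ∈ Finset.univ.erase i, Q i j * u j)
        ≤ a * x i * (γ θ₁ + ε - (∑ k, θ₁ k * v k i) - Q i i) := by
      have := mul_le_mul_of_nonneg_left hu_e
        (le_of_lt (div_pos (mul_pos ha' (hx_pos i)) (hu_pos i)))
      calc (a * x i / u i) * (∑ j ∈ Finset.univ.erase i, Q i j * u j)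
          ≤ (a * x i / u i) * ((γ θ₁ + ε - (∑ k, θ₁ k * v k i) - Q i i) * u i) := this
        _ = a * x i * (γ θ₁ + ε - (∑ k, θ₁ k * v k i) - Q i i) := by
            have h3 := (hu_pos i).ne'
            field_simp
    have hE3 : (b * x i / w i) * (∑ j ∈ Finset.univ.erase i, Q i j * w j)
        ≤ b * x i * (γ θ₂ + ε - (∑ k, θ₂ k * v k i) - Q i i) := by
      have := mul_le_mul_of_nonneg_left hw_e
        (le_of_lt (div_pos (mul_pos hb' (hx_pos i)) (hw_pos i)))
      calc (b * x i / w i) * (∑ j ∈ Finset.univ.erase i, Q i j * w j)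
          ≤ (b * x i / w i) * ((γ θ₂ + ε - (∑ k, θ₂ k * v k i) - Q i i) * w i) := this
        _ = b * x i * (γ θ₂ + ε - (∑ k, θ₂ k * v k i) - Q i i) := by
            have h4 := (hw_pos i).ne'
            field_simp
    have hVi : (∑ k, θ k * v k i)
        = a * (∑ k, θ₁ k * v k i) + b * (∑ k, θ₂ k * v k i) := by
      rw [hθ_def, Finset.mul_sum, Finset.mul_sum, ← Finset.sum_add_distrib]
      refine Finset.sum_congr rfl fun k _ => ?_
      simp only [Pi.add_apply, Pi.smul_apply, smul_eq_mul]
      ring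
    rw [hsum (fun i => ∑ k, θ k * v k i) x i]
    have hgoal : ((∑ k, θ k * v k i) + Q i i) * x i
        + (a * x i * (γ θ₁ + ε - (∑ k, θ₁ k * v k i) - Q i i)
          + b * x i * (γ θ₂ + ε - (∑ k, θ₂ k * v k i) - Q i i)) = r * x i := by
      rw [hr_def]
      linear_combination (x i) * hVi + (-(Q i i * x i)) * hab
    linarith [hE, hE2, hE3]
  -- Collatz–Wielandt bound
  have hcw : ∀ μ ∈ spectrum ℂ
      ((Matrix.diagonal (fun i => ∑ k, θ k * v k i) + Q).map Complex.ofReal), μ.re ≤ r :=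
    fun μ hμ => cw_bound _ (hoffgen _) x hx_pos r hrow hμ
  obtain ⟨μ, hμmem, hμre⟩ := (hγ θ).1
  have hre : γ θ ≤ r := hμre ▸ hcw μ hμmem
  have hr_eq : r = a * γ θ₁ + b * γ θ₂ + ε := by
    rw [hr_def]
    linear_combination ε * hab
  linarith
end

section
/- The hyperplane perpendicular to v̄ through the origin supports the set Γ⁻ = {θ ∈ ℝ^d : γ(θ) < 0}: every θ ∈ ℝ^d with γ(θ) < 0 satisfies ⟨v̄, θ⟩ ≤ 0. -/
open Matrix Filter

lemma matrix_exists_pos_sol (m : ℕ) [Nonempty (Fin m)] (A : Matrix (Fin m) (Fin m) ℝ)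
    (hoff : ∀ i j : Fin m, i ≠ j → 0 ≤ A i j)
    (ε : ℝ) (hε : 0 < ε)
    (hspec : ∀ μ ∈ spectrum ℂ (A.map Complex.ofReal), μ.re ≤ -ε) :
    ∃ h : Fin m → ℝ, (∀ i, 0 < h i) ∧ ∀ i, ∑ j, A i j * h j = -1 := by
  classical
  letI : NormedRing (Matrix (Fin m) (Fin m) ℂ) := Matrix.linftyOpNormedRing
  letI : NormedAlgebra ℂ (Matrix (Fin m) (Fin m) ℂ) := Matrix.linftyOpNormedAlgebra
  letI : CompleteSpace (Matrix (Fin m) (Fin m) ℂ) :=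
    FiniteDimensional.complete ℂ (Matrix (Fin m) (Fin m) ℂ)
  set Ac : Matrix (Fin m) (Fin m) ℂ := A.map Complex.ofReal with hAc
  set N : ℝ := ‖Ac‖ with hN
  have hN0 : 0 ≤ N := norm_nonneg _
  set c : ℝ := 1 + (∑ i, |A i i|) + N ^ 2 / (2 * ε) with hc
  have hsum0 : (0:ℝ) ≤ ∑ i, |A i i| := Finset.sum_nonneg fun i _ => abs_nonneg _
  have hc0 : 0 < c := by
    have h2 : (0:ℝ) ≤ N ^ 2 / (2 * ε) := by positivity
    rw [hc]; linarith
  set P : Matrix (Fin m) (Fin m) ℝ := c • (1 : Matrix (Fin m) (Fin m) ℝ) + A with hP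
  have hPapp : ∀ i j, P i j = (if i = j then c else 0) + A i j := by
    intro i j
    simp [hP, Matrix.add_apply, Matrix.smul_apply, Matrix.one_apply, mul_ite]
  have hPnn : ∀ i j, 0 ≤ P i j := by
    intro i j
    rw [hPapp]
    by_cases hij : i = j
    · subst hij
      rw [if_pos rfl]
      have habs : |A i i| ≤ ∑ k, |A k k| :=
        Finset.single_le_sum (f := fun k => |A k k|) (fun k _ => abs_nonneg _) (Finset.mem_univ i)
      have h2 : (0:ℝ) ≤ N ^ 2 / (2 * ε) := by positivity
      have hneg := neg_abs_le (A i i)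
      rw [hc]; linarith
    · simpa [hij] using hoff i j hij
  -- complex version of P
  set Pc : Matrix (Fin m) (Fin m) ℂ := P.map Complex.ofReal with hPc
  have hPcalg : Pc = algebraMap ℂ (Matrix (Fin m) (Fin m) ℂ) (c : ℂ) + Ac := by
    ext i j
    simp [hPc, hAc, Matrix.map_apply, hPapp, Matrix.algebraMap_matrix_apply, Matrix.add_apply]
    split <;> simp
  -- spectrum bound
  have hδ : 0 < 2 * c * ε - N ^ 2 := by
    have : 2 * c * ε = 2 * ε * (1 + ∑ i, |A i i|) + N ^ 2 := by
      rw [hc]; field_simp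
    nlinarith
  set r' : ℝ := Real.sqrt (c ^ 2 - (2 * c * ε - N ^ 2)) with hr'
  have hr'0 : 0 ≤ r' := Real.sqrt_nonneg _
  have hr'c : r' < c := by
    rw [hr', Real.sqrt_lt' hc0]
    linarith
  have hspecP : ∀ μ ∈ spectrum ℂ Pc, ‖μ‖ ≤ r' := by
    intro μ hμ
    rw [hPcalg, ← spectrum.singleton_add_eq] at hμ
    obtain ⟨x, hx, y, hy, hxy⟩ := Set.mem_add.mp hμ
    rw [Set.mem_singleton_iff] at hx
    subst hx
    have hre : y.re ≤ -ε := hspec y hy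
    have hnorm : ‖y‖ ≤ N := spectrum.norm_le_norm_of_mem hy
    have h1 : ‖μ‖ ^ 2 ≤ c ^ 2 - (2 * c * ε - N ^ 2) := by
      have hμsq : ‖μ‖ ^ 2 = (c + y.re) ^ 2 + y.im ^ 2 := by
        rw [← hxy, Complex.sq_norm, Complex.normSq_apply]
        simp
        ring
      have hysq : ‖y‖ ^ 2 = y.re ^ 2 + y.im ^ 2 := by
        rw [Complex.sq_norm, Complex.normSq_apply]
        ring
      nlinarith [norm_nonneg y]
    rw [hr', Real.le_sqrt (norm_nonneg μ) (by nlinarith [sq_nonneg ‖μ‖] : (0:ℝ) ≤ c ^ 2 - (2 * c * ε - N ^ 2))]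
    exact h1
  -- spectral radius bound
  have hρ : spectralRadius ℂ Pc ≤ ENNReal.ofReal r' := by
    rw [spectralRadius]
    refine iSup₂_le fun k hk => ?_
    rw [← enorm_eq_nnnorm, ← ofReal_norm]
    exact ENNReal.ofReal_le_ofReal (hspecP k hk)
  clear_value Ac N c Pc r'
  set r : ℝ := (r' + c) / 2 with hrdef
  have hr0 : 0 < r := by rw [hrdef]; linarith
  have hrc : r < c := by rw [hrdef]; linarith
  have hr'r : r' < r := by rw [hrdef]; linarith
  clear_value r
  have hev : ∀ᶠ n : ℕ in atTop, (‖Pc ^ n‖₊ : ENNReal) ^ (1 / (n:ℝ)) < ENNReal.ofReal r := by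
    apply (spectrum.pow_nnnorm_pow_one_div_tendsto_nhds_spectralRadius Pc).eventually_lt_const
    exact lt_of_le_of_lt hρ ((ENNReal.ofReal_lt_ofReal_iff hr0).mpr hr'r)
  obtain ⟨n₀, hn₀⟩ := eventually_atTop.mp hev
  have hnormbound : ∀ n, n₀ + 1 ≤ n → ‖Pc ^ n‖ ≤ r ^ n := by
    intro n hn
    have hnn : (n:ℝ) ≠ 0 := Nat.cast_ne_zero.mpr (by omega)
    have h1 := (hn₀ n (by omega)).le
    have h2 := ENNReal.rpow_le_rpow h1 (Nat.cast_nonneg n : (0:ℝ) ≤ (n:ℝ))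
    rw [← ENNReal.rpow_mul, one_div, inv_mul_cancel₀ hnn, ENNReal.rpow_one,
      ENNReal.ofReal_rpow_of_pos hr0, Real.rpow_natCast,
      ← enorm_eq_nnnorm, ← ofReal_norm] at h2
    exact (ENNReal.ofReal_le_ofReal_iff (by positivity)).mp h2
  -- nonnegativity of powers of P
  have hPpow : ∀ n : ℕ, ∀ i j, 0 ≤ (P ^ n) i j := by
    intro n
    induction n with
    | zero =>
        intro i j
        rw [pow_zero, Matrix.one_apply]
        split <;> norm_num
    | succ n ih =>
        intro i j
        rw [pow_succ, Matrix.mul_apply]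
        exact Finset.sum_nonneg fun k _ => mul_nonneg (ih i k) (hPnn k j)
  have hmapn : ∀ n : ℕ, Pc ^ n = (P ^ n).map Complex.ofReal := by
    intro n
    have := map_pow (Complex.ofRealHom.mapMatrix (m := Fin m)) P n
    simp only [RingHom.mapMatrix_apply] at this
    rw [hPc]
    exact_mod_cast this.symm
  have hrowbound : ∀ n : ℕ, ∀ i, ∑ j, (P ^ n) i j ≤ ‖Pc ^ n‖ := by
    intro n i
    have h1 : ∑ j, (P ^ n) i j = ((∑ j, ‖(Pc ^ n) i j‖₊ : NNReal) : ℝ) := by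
      push_cast
      rw [hmapn n]
      refine Finset.sum_congr rfl fun j _ => ?_
      rw [Matrix.map_apply, Complex.norm_real]
      exact (abs_of_nonneg (hPpow n i j)).symm
    rw [h1]
    have h2 : (∑ j, ‖(Pc ^ n) i j‖₊ : NNReal) ≤ ‖Pc ^ n‖₊ := by
      rw [Matrix.linfty_opNNNorm_def]
      exact Finset.le_sup (f := fun i => ∑ j, ‖(Pc ^ n) i j‖₊) (Finset.mem_univ i)
    exact_mod_cast h2
  -- the series
  set s : ℕ → Fin m → ℝ := fun n i => (∑ j, (P ^ n) i j) / c ^ (n + 1) with hs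
  have hs_nonneg : ∀ n i, 0 ≤ s n i := fun n i =>
    div_nonneg (Finset.sum_nonneg fun j _ => hPpow n i j) (pow_nonneg hc0.le _)
  have hg : Summable (fun n : ℕ => r ^ n / c ^ (n + 1)) := by
    have he : (fun n : ℕ => r ^ n / c ^ (n + 1)) = fun n => (1 / c) * (r / c) ^ n := by
      funext n
      rw [div_pow, pow_succ]
      field_simp
    rw [he]
    exact (summable_geometric_of_lt_one (by positivity)
      (by rw [div_lt_one hc0]; exact hrc)).mul_left _
  have hsummable : ∀ i, Summable fun n => s n i := by
    intro i
    rw [← summable_nat_add_iff (n₀ + 1)]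
    refine Summable.of_nonneg_of_le (fun n => hs_nonneg _ i) (fun n => ?_)
      ((summable_nat_add_iff (n₀ + 1)).mpr hg)
    simp only [hs]
    gcongr
    exact le_trans (hrowbound _ i) (hnormbound _ (by omega))
  have hs0 : ∀ i, s 0 i = 1 / c := by
    intro i
    simp [hs, Matrix.one_apply]
  set h : Fin m → ℝ := fun i => ∑' n, s n i with hh
  have hhpos : ∀ i, 0 < h i := by
    intro i
    have hle := Summable.le_tsum (hsummable i) 0 (fun n _ => hs_nonneg n i)
    rw [hs0 i] at hle
    calc (0:ℝ) < 1 / c := by positivity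
      _ ≤ h i := hle
  have key : ∀ i, ∑ j, P i j * h j = c * h i - 1 := by
    intro i
    have h1 : ∑ j, P i j * h j = ∑' n, ∑ j, P i j * s n j := by
      calc ∑ j, P i j * h j = ∑ j, ∑' n, P i j * s n j :=
            Finset.sum_congr rfl fun j _ => tsum_mul_left.symm
        _ = ∑' n, ∑ j, P i j * s n j :=
            (Summable.tsum_finsetSum fun j _ => (hsummable j).mul_left _).symm
    have h2 : ∀ n, ∑ j, P i j * s n j = c * s (n + 1) i := by
      intro n
      have e1 : ∑ k, (P ^ (n + 1)) i k = ∑ j, P i j * ∑ k, (P ^ n) j k := by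
        rw [pow_succ']
        simp only [Matrix.mul_apply]
        rw [Finset.sum_comm]
        simp only [← Finset.mul_sum]
      simp only [hs]
      have e2 : ∑ j, P i j * ((∑ k, (P ^ n) j k) / c ^ (n + 1))
          = (∑ j, P i j * ∑ k, (P ^ n) j k) / c ^ (n + 1) := by
        rw [Finset.sum_div]
        exact Finset.sum_congr rfl fun j _ => (mul_div_assoc _ _ _).symm
      rw [e2, ← e1, pow_succ]
      field_simp
      ring
    have hshift : ∑' n, s (n + 1) i = h i - s 0 i := by
      have := Summable.tsum_eq_zero_add (hsummable i)
      rw [hh]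
      simp only []
      linarith [this]
    calc ∑ j, P i j * h j = ∑' n, ∑ j, P i j * s n j := h1
      _ = ∑' n, c * s (n + 1) i := by simp only [h2]
      _ = c * ∑' n, s (n + 1) i := tsum_mul_left
      _ = c * (h i - s 0 i) := by rw [hshift]
      _ = c * h i - 1 := by rw [hs0 i]; field_simp
  refine ⟨h, hhpos, fun i => ?_⟩
  have hcalc : ∑ j, A i j * h j
      = (∑ j, P i j * h j) - ∑ j, (if i = j then c else 0) * h j := by
    rw [← Finset.sum_sub_distrib]
    refine Finset.sum_congr rfl fun j _ => ?_
    rw [hPapp]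
    ring
  rw [hcalc, key i]
  have : ∑ j, (if i = j then c else 0) * h j = c * h i := by
    simp [ite_mul, Finset.sum_ite_eq]
  rw [this]
  ring

/-- The hyperplane through the origin perpendicular to `v̄` supports
`Γ⁻ = {θ : γ θ < 0}`: every `θ` with `γ θ < 0` satisfies `⟨v̄, θ⟩ ≤ 0`. -/
theorem GammaMinus_supported (m d : ℕ) (hm : 2 ≤ m) (hd : 2 ≤ d)
    (Q : Matrix (Fin m) (Fin m) ℝ)
    (hQoff : ∀ i j, i ≠ j → 0 ≤ Q i j)
    (hQrow : ∀ i, ∑ j, Q i j = 0)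
    (hQirr : ∀ i j : Fin m, i ≠ j → ∃ n : ℕ, ∃ c : Fin (n + 1) → Fin m,
      c 0 = i ∧ c (Fin.last n) = j ∧ ∀ r : Fin n, 0 < Q (c r.castSucc) (c r.succ))
    (v : Fin d → Fin m → ℝ)
    (γ : (Fin d → ℝ) → ℝ)
    (hγ : ∀ θ : Fin d → ℝ, IsGreatest
      (Complex.re '' spectrum ℂ
        ((Matrix.diagonal (fun i => ∑ k, θ k * v k i) + Q).map Complex.ofReal))
      (γ θ))
    (π : Fin m → ℝ) (hπ0 : ∀ i, 0 ≤ π i) (hπ1 : ∑ i, π i = 1)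
    (hπQ : ∀ j, ∑ i, π i * Q i j = 0)
    (vbar : Fin d → ℝ) (hvbar : ∀ k, vbar k = ∑ i, π i * v k i) :
    ∀ θ : Fin d → ℝ, γ θ < 0 → ∑ k, vbar k * θ k ≤ 0 := by
  intro θ hθ
  haveI : Nonempty (Fin m) := Fin.pos_iff_nonempty.mp (by omega)
  set u : Fin m → ℝ := fun i => ∑ k, θ k * v k i with hu
  set A : Matrix (Fin m) (Fin m) ℝ := Matrix.diagonal u + Q with hA
  have hoff : ∀ i j : Fin m, i ≠ j → 0 ≤ A i j := by
    intro i j hij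
    rw [hA]
    simp only [Matrix.add_apply, Matrix.diagonal_apply_ne _ hij, zero_add]
    exact hQoff i j hij
  have hspec : ∀ μ ∈ spectrum ℂ (A.map Complex.ofReal), μ.re ≤ -(-γ θ) := by
    intro μ hμ
    rw [neg_neg]
    exact (hγ θ).2 ⟨μ, hμ, rfl⟩
  obtain ⟨h, hhpos, hheq⟩ := matrix_exists_pos_sol m A hoff (-γ θ) (by linarith) hspec
  have hrow : ∀ i, u i * h i + ∑ j, Q i j * h j = -1 := by
    intro i
    have e : ∑ j, A i j * h j = u i * h i + ∑ j, Q i j * h j := by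
      simp only [hA, Matrix.add_apply, add_mul]
      rw [Finset.sum_add_distrib]
      congr 1
      simp [Matrix.diagonal_apply, ite_mul, Finset.sum_ite_eq]
    have := hheq i
    rw [e] at this
    exact this
  set L : Fin m → ℝ := fun j => Real.log (h j) with hL
  have hui : ∀ i, u i ≤ ∑ j, Q i j * (L i - L j) := by
    intro i
    have hhi := hhpos i
    have hstep : (∑ j, Q i j * (L j - L i)) * h i ≤ ∑ j, Q i j * h j := by
      have e0 : ∑ j, Q i j * h j = ∑ j, Q i j * (h j - h i) := by
        simp only [mul_sub]
        rw [Finset.sum_sub_distrib, ← Finset.sum_mul, hQrow i, zero_mul, sub_zero]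
      rw [e0, Finset.sum_mul]
      refine Finset.sum_le_sum fun j _ => ?_
      by_cases hij : j = i
      · subst hij; simp
      · have hq := hQoff i j (Ne.symm hij)
        have hlog : L j - L i ≤ h j / h i - 1 := by
          have h1 : Real.log (h j / h i) ≤ h j / h i - 1 :=
            Real.log_le_sub_one_of_pos (div_pos (hhpos j) hhi)
          rw [Real.log_div (ne_of_gt (hhpos j)) (ne_of_gt hhi)] at h1
          exact h1
        have h2 : (L j - L i) * h i ≤ (h j / h i - 1) * h i :=
          mul_le_mul_of_nonneg_right hlog hhi.le
        have h3 : (h j / h i - 1) * h i = h j - h i := by field_simp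
        calc Q i j * (L j - L i) * h i = Q i j * ((L j - L i) * h i) := by ring
          _ ≤ Q i j * ((h j / h i - 1) * h i) := mul_le_mul_of_nonneg_left h2 hq
          _ = Q i j * (h j - h i) := by rw [h3]
    have h4 : u i * h i < (∑ j, Q i j * (L i - L j)) * h i := by
      have e1 : (∑ j, Q i j * (L i - L j)) * h i = -((∑ j, Q i j * (L j - L i)) * h i) := by
        rw [← neg_mul, ← Finset.sum_neg_distrib]
        congr 1
        exact Finset.sum_congr rfl fun j _ => by ring
      rw [e1]
      have := hrow i
      linarith
    exact le_of_lt ((mul_lt_mul_iff_left₀ hhi).mp h4)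
  have hsumu : ∑ i, π i * u i ≤ 0 := by
    have h6 : ∑ i, π i * u i ≤ ∑ i, π i * ∑ j, Q i j * (L i - L j) :=
      Finset.sum_le_sum fun i _ => mul_le_mul_of_nonneg_left (hui i) (hπ0 i)
    have h7 : ∑ i, π i * ∑ j, Q i j * (L i - L j) = 0 := by
      have e2 : ∀ i, π i * ∑ j, Q i j * (L i - L j) = -∑ j, (π i * Q i j) * L j := by
        intro i
        have e3 : ∑ j, Q i j * (L i - L j) = (∑ j, Q i j) * L i - ∑ j, Q i j * L j := by
          rw [Finset.sum_mul, ← Finset.sum_sub_distrib]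
          exact Finset.sum_congr rfl fun j _ => by ring
        rw [e3, hQrow i, zero_mul, zero_sub, mul_neg, Finset.mul_sum]
        congr 1
        exact Finset.sum_congr rfl fun j _ => by ring
      simp only [e2]
      rw [Finset.sum_neg_distrib]
      have e4 : ∑ i, ∑ j, (π i * Q i j) * L j = 0 := by
        rw [Finset.sum_comm]
        refine Finset.sum_eq_zero fun j _ => ?_
        rw [← Finset.sum_mul, hπQ j, zero_mul]
      rw [e4, neg_zero]
    linarith
  have hgoal : ∑ k, vbar k * θ k = ∑ i, π i * u i := by
    calc ∑ k, vbar k * θ k = ∑ k, ∑ i, (π i * v k i) * θ k := by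
          refine Finset.sum_congr rfl fun k _ => ?_
          rw [hvbar k, Finset.sum_mul]
      _ = ∑ i, ∑ k, (π i * v k i) * θ k := Finset.sum_comm
      _ = ∑ i, π i * u i := by
          refine Finset.sum_congr rfl fun i _ => ?_
          rw [hu, Finset.mul_sum]
          exact Finset.sum_congr rfl fun k _ => by ring
  rw [hgoal]
  exact hsumu
end

section
/- If the stability condition holds, namely every entry of R⁻¹ v̄ is strictly negative, then there exists at least one index k ∈ {1,…,d} and some t > 0 such that γ(t e_k) < 0, where e_k is the k-th standard unit vector; that is, the nonnegative half line of the k-th coordinate axis intersects Γ⁻ = {θ : γ(θ) < 0} at a point other than the origin. -/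
open Matrix Filter

/-- Eigenvector extraction from matrix spectrum. -/
lemma exists_eigvec {n : ℕ} (M : Matrix (Fin n) (Fin n) ℂ) {μ : ℂ} (hμ : μ ∈ spectrum ℂ M) :
    ∃ x : Fin n → ℂ, x ≠ 0 ∧ M *ᵥ x = μ • x := by
  rw [← AlgEquiv.spectrum_eq (Matrix.toLinAlgEquiv' : Matrix (Fin n) (Fin n) ℂ ≃ₐ[ℂ] _),
    ← Module.End.hasEigenvalue_iff_mem_spectrum] at hμ
  obtain ⟨x, hx1, hx0⟩ := hμ.exists_hasEigenvector
  refine ⟨x, hx0, ?_⟩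
  have := Module.End.mem_eigenspace_iff.mp hx1
  rwa [Matrix.toLinAlgEquiv'_apply] at this

/-- Bound on real parts of eigenvalues of an essentially nonnegative matrix via a positive
test vector. -/
lemma specRe_le {m : ℕ} (K : Matrix (Fin m) (Fin m) ℝ)
    (hoff : ∀ i j, i ≠ j → 0 ≤ K i j) (h : Fin m → ℝ) (hh : ∀ i, 0 < h i)
    (b : ℝ) (hb : ∀ i, (K *ᵥ h) i ≤ b * h i)
    {μ : ℂ} (hμ : μ ∈ spectrum ℂ (K.map Complex.ofReal)) : μ.re ≤ b := by
  obtain ⟨x, hx0, hx⟩ := exists_eigvec _ hμ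
  obtain ⟨j0, hj0⟩ := Function.ne_iff.mp hx0
  have : Nonempty (Fin m) := ⟨j0⟩
  obtain ⟨i, -, hi⟩ := Finset.exists_max_image Finset.univ
    (fun i => ‖x i‖ / h i) Finset.univ_nonempty
  have hxi : 0 < ‖x i‖ := by
    have h1 : 0 < ‖x j0‖ / h j0 :=
      div_pos (by simpa using hj0) (hh j0)
    have h2 := hi j0 (Finset.mem_univ j0)
    have h3 : 0 < ‖x i‖ / h i := lt_of_lt_of_le h1 h2
    have h4 := mul_pos h3 (hh i)
    rwa [div_mul_cancel₀ _ (hh i).ne'] at h4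
  have key : ∀ j, ‖x j‖ ≤ h j * (‖x i‖ / h i) := by
    intro j
    have h1 := hi j (Finset.mem_univ j)
    calc ‖x j‖ = (‖x j‖ / h j) * h j :=
          (div_mul_cancel₀ _ (hh j).ne').symm
      _ ≤ (‖x i‖ / h i) * h j :=
          mul_le_mul_of_nonneg_right h1 (hh j).le
      _ = h j * (‖x i‖ / h i) := mul_comm _ _
  have eig : ∑ j, (K i j : ℂ) * x j = μ * x i := by
    have := congrFun hx i
    simpa [Matrix.mulVec, dotProduct, Matrix.map_apply] using this
  have eq1 : (μ - (K i i : ℂ)) * x i = ∑ j ∈ Finset.univ.erase i, (K i j : ℂ) * x j := by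
    have := Finset.add_sum_erase Finset.univ (fun j => (K i j : ℂ) * x j) (Finset.mem_univ i)
    rw [eig] at this
    rw [sub_mul, ← this]
    ring
  set S : ℝ := ∑ j ∈ Finset.univ.erase i, K i j * h j with hS
  have hS0 : 0 ≤ S := Finset.sum_nonneg fun j hj =>
    mul_nonneg (hoff i j (Finset.ne_of_mem_erase hj).symm) (hh j).le
  have habs : ‖μ - (K i i : ℂ)‖ * ‖x i‖ ≤
      (S / h i) * ‖x i‖ := by
    rw [← norm_mul, eq1]
    calc ‖∑ j ∈ Finset.univ.erase i, (K i j : ℂ) * x j‖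
        ≤ ∑ j ∈ Finset.univ.erase i, ‖(K i j : ℂ) * x j‖ :=
          norm_sum_le _ _
      _ ≤ ∑ j ∈ Finset.univ.erase i, K i j * (h j * (‖x i‖ / h i)) := by
          refine Finset.sum_le_sum fun j hj => ?_
          have hK : 0 ≤ K i j := hoff i j (Finset.ne_of_mem_erase hj).symm
          rw [norm_mul, Complex.norm_real, Real.norm_eq_abs, abs_of_nonneg hK]
          exact mul_le_mul_of_nonneg_left (key j) hK
      _ = S * (‖x i‖ / h i) := by
          rw [hS, Finset.sum_mul]
          exact Finset.sum_congr rfl fun j _ => (mul_assoc _ _ _).symm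
      _ = (S / h i) * ‖x i‖ := by ring
  have h2 : ‖μ - (K i i : ℂ)‖ ≤ S / h i :=
    (mul_le_mul_iff_of_pos_right hxi).mp habs
  have h3 : μ.re - K i i ≤ ‖μ - (K i i : ℂ)‖ := by
    have e1 : (μ - (K i i : ℂ)).re = μ.re - K i i := by simp
    have := Complex.abs_re_le_norm (μ - (K i i : ℂ))
    rw [e1] at this
    exact (le_abs_self _).trans this
  have h4 : (K *ᵥ h) i = K i i * h i + S := by
    simp only [Matrix.mulVec, dotProduct]
    rw [hS, ← Finset.add_sum_erase Finset.univ (fun j => K i j * h j) (Finset.mem_univ i)]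
  have h5 : K i i + S / h i ≤ b := by
    have hb' := hb i
    rw [h4] at hb'
    have hhi := hh i
    rw [← sub_nonneg]
    have : b - (K i i + S / h i) = (b * h i - (K i i * h i + S)) / h i := by
      field_simp
    rw [this]
    exact div_nonneg (by linarith) hhi.le
  linarith

lemma ker_const {m : ℕ} (Q : Matrix (Fin m) (Fin m) ℝ)
    (hQoff : ∀ i j, i ≠ j → 0 ≤ Q i j) (hQrow : ∀ i, ∑ j, Q i j = 0)
    (hQirr : ∀ i j : Fin m, i ≠ j → ∃ n : ℕ, ∃ c : Fin (n + 1) → Fin m,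
      c 0 = i ∧ c (Fin.last n) = j ∧ ∀ r : Fin n, 0 < Q (c r.castSucc) (c r.succ))
    (x : Fin m → ℝ) (hx : Q *ᵥ x = 0) (i j : Fin m) : x i = x j := by
  have hne : Nonempty (Fin m) := ⟨i⟩
  have step : ∀ a b, (∀ j', x j' ≤ x a) → 0 < Q a b → x b = x a := by
    intro a b hmax hab
    by_cases hba : b = a
    · rw [hba]
    have h1 : ∑ j', Q a j' * x j' = 0 := by
      have := congrFun hx a
      simpa [Matrix.mulVec, dotProduct] using this
    have h2 : ∑ j', Q a j' * x a = 0 := by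
      rw [← Finset.sum_mul, hQrow, zero_mul]
    have h0 : ∑ j', Q a j' * (x j' - x a) = 0 := by
      simp only [mul_sub, Finset.sum_sub_distrib, h1, h2, sub_zero]
    have hnonpos : ∀ j' ∈ Finset.univ, Q a j' * (x j' - x a) ≤ 0 := by
      intro j' _
      by_cases hj : j' = a
      · simp [hj]
      · exact mul_nonpos_of_nonneg_of_nonpos (hQoff a j' fun h => hj h.symm)
          (sub_nonpos.mpr (hmax j'))
    have hz := (Finset.sum_eq_zero_iff_of_nonpos hnonpos).mp h0 b (Finset.mem_univ b)
    rcases mul_eq_zero.mp hz with h | h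
    · exact absurd h hab.ne'
    · linarith [sub_eq_zero.mp h]
  obtain ⟨i0, -, hi0⟩ := Finset.exists_max_image Finset.univ x Finset.univ_nonempty
  have hconst : ∀ a, x a = x i0 := by
    intro a
    by_cases ha : a = i0
    · rw [ha]
    obtain ⟨n, c, hc0, hcl, hcp⟩ := hQirr i0 a fun h => ha h.symm
    have hchain : ∀ r : Fin (n + 1), x (c r) = x i0 := by
      intro r
      induction r using Fin.induction with
      | zero => rw [hc0]
      | succ r ih =>
        have hmax : ∀ j', x j' ≤ x (c r.castSucc) := by
          rw [ih]; exact fun j' => hi0 j' (Finset.mem_univ j')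
        rw [step (c r.castSucc) (c r.succ) hmax (hcp r), ih]
    rw [← hcl]; exact hchain _
  rw [hconst i, hconst j]

lemma poisson {m : ℕ} (hm : 0 < m) (Q : Matrix (Fin m) (Fin m) ℝ)
    (hQoff : ∀ i j, i ≠ j → 0 ≤ Q i j) (hQrow : ∀ i, ∑ j, Q i j = 0)
    (hQirr : ∀ i j : Fin m, i ≠ j → ∃ n : ℕ, ∃ c : Fin (n + 1) → Fin m,
      c 0 = i ∧ c (Fin.last n) = j ∧ ∀ r : Fin n, 0 < Q (c r.castSucc) (c r.succ))
    (π : Fin m → ℝ) (hπ1 : ∑ i, π i = 1) (hπQ : ∀ j, ∑ i, π i * Q i j = 0)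
    (w : Fin m → ℝ) (hw : ∑ i, π i * w i = 0) : ∃ g, Q *ᵥ g = w := by
  classical
  set f := Q.mulVecLin with hf
  let L : (Fin m → ℝ) →ₗ[ℝ] ℝ :=
    { toFun := fun x => ∑ i, π i * x i
      map_add' := by intro a b; simp [mul_add, Finset.sum_add_distrib]
      map_smul' := by
        intro c a
        simp only [Pi.smul_apply, smul_eq_mul, RingHom.id_apply, Finset.mul_sum]
        exact Finset.sum_congr rfl fun i _ => by ring }
  have hone : (fun _ => (1 : ℝ) : Fin m → ℝ) ≠ 0 := by
    intro h
    have := congrFun h ⟨0, hm⟩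
    norm_num at this
  have hker : LinearMap.ker f = Submodule.span ℝ {(fun _ => 1 : Fin m → ℝ)} := by
    apply le_antisymm
    · intro x hx
      have hx' : Q *ᵥ x = 0 := LinearMap.mem_ker.mp hx
      have hc := ker_const Q hQoff hQrow hQirr x hx'
      have : x = x ⟨0, hm⟩ • (fun _ => 1 : Fin m → ℝ) := by
        funext a
        simp [hc a ⟨0, hm⟩]
      rw [this]
      exact Submodule.smul_mem _ _ (Submodule.mem_span_singleton_self _)
    · rw [Submodule.span_singleton_le_iff_mem]
      refine LinearMap.mem_ker.mpr ?_
      funext a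
      have : (Q *ᵥ fun _ => (1:ℝ)) a = 0 := by
        simpa [Matrix.mulVec, dotProduct] using hQrow a
      simpa [hf, Matrix.mulVecLin_apply] using this
  have h1 : Module.finrank ℝ (LinearMap.ker f) = 1 := by
    rw [hker]
    exact finrank_span_singleton hone
  have hrk := LinearMap.finrank_range_add_finrank_ker f
  rw [h1, Module.finrank_pi ℝ, Fintype.card_fin] at hrk
  have hLsurj : Function.Surjective L := by
    intro c
    refine ⟨c • (fun _ => 1 : Fin m → ℝ), ?_⟩
    show ∑ i, π i * (c • (fun _ => (1:ℝ)) : Fin m → ℝ) i = c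
    simp [← Finset.sum_mul, hπ1]
  have hLker : Module.finrank ℝ (LinearMap.ker L) = m - 1 := by
    have h2 := LinearMap.finrank_range_add_finrank_ker L
    rw [LinearMap.range_eq_top.mpr hLsurj, finrank_top, Module.finrank_self,
      Module.finrank_pi ℝ, Fintype.card_fin] at h2
    omega
  have hle : LinearMap.range f ≤ LinearMap.ker L := by
    rintro y ⟨x, rfl⟩
    refine LinearMap.mem_ker.mpr ?_
    show ∑ i, π i * (Q *ᵥ x) i = 0
    have : ∑ i, π i * (Q *ᵥ x) i = ∑ j, (∑ i, π i * Q i j) * x j := by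
      simp only [Matrix.mulVec, dotProduct, Finset.mul_sum, Finset.sum_mul]
      rw [Finset.sum_comm]
      exact Finset.sum_congr rfl fun j _ => Finset.sum_congr rfl fun i _ => by ring
    rw [this]
    simp [hπQ]
  have heq : LinearMap.range f = LinearMap.ker L := by
    apply Submodule.eq_of_le_of_finrank_eq hle
    rw [hLker]
    omega
  have hwmem : w ∈ LinearMap.range f := by
    rw [heq]
    exact LinearMap.mem_ker.mpr hw
  obtain ⟨g, hg⟩ := hwmem
  exact ⟨g, hg⟩

lemma exists_neg_vbar {d : ℕ} (hd : 0 < d) (vbar : Fin d → ℝ)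
    (P : Matrix (Fin d) (Fin d) ℝ) (hP : ∀ k l, 0 ≤ P k l)
    (hPn : Tendsto (fun n => P ^ n) atTop (nhds 0))
    (R : Matrix (Fin d) (Fin d) ℝ) (hR : R = 1 - Pᵀ)
    (hstab : ∀ k, (R⁻¹ *ᵥ vbar) k < 0) : ∃ k, vbar k < 0 := by
  by_contra hcon
  push_neg at hcon
  have hent : ∀ l k : Fin d, Tendsto (fun n => (P ^ n) l k) atTop (nhds 0) := by
    intro l k
    have hc : Continuous fun M : Matrix (Fin d) (Fin d) ℝ => M l k :=
      (continuous_apply k).comp (continuous_apply l)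
    have := (hc.tendsto 0).comp hPn
    exact this
  have hPpow : ∀ n (k l : Fin d), 0 ≤ (P ^ n) k l := by
    intro n
    induction n with
    | zero =>
      intro k l
      by_cases h : k = l <;> simp [Matrix.one_apply, h]
    | succ n ih =>
      intro k l
      rw [pow_succ, Matrix.mul_apply]
      exact Finset.sum_nonneg fun j _ => mul_nonneg (ih k j) (hP j l)
  have hTent : ∀ (z : Fin d → ℝ) (k : Fin d) (n : ℕ),
      ((Pᵀ) ^ n *ᵥ z) k = ∑ l, (P ^ n) l k * z l := by
    intro z k n
    rw [← Matrix.transpose_pow]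
    simp [Matrix.mulVec, dotProduct, Matrix.transpose_apply]
  have hdet : R.det ≠ 0 := by
    intro h0
    obtain ⟨y, hy0, hy⟩ := (Matrix.exists_mulVec_eq_zero_iff).mpr h0
    have hPy : Pᵀ *ᵥ y = y := by
      have h1 : (1 - Pᵀ) *ᵥ y = 0 := hR ▸ hy
      rw [Matrix.sub_mulVec, Matrix.one_mulVec, sub_eq_zero] at h1
      exact h1.symm
    have hiter : ∀ n : ℕ, (Pᵀ) ^ n *ᵥ y = y := by
      intro n
      induction n with
      | zero => simp
      | succ n ih => rw [pow_succ, ← Matrix.mulVec_mulVec, hPy, ih]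
    apply hy0
    funext k
    have hlim : Tendsto (fun n => ∑ l, (P ^ n) l k * y l) atTop (nhds 0) := by
      have := tendsto_finset_sum Finset.univ (fun l (_ : l ∈ Finset.univ) => (hent l k).mul_const (y l))
      simpa using this
    have hconst : (fun _ : ℕ => y k) = fun n => ∑ l, (P ^ n) l k * y l := by
      funext n
      rw [← hTent y k n, hiter n]
    rw [← hconst] at hlim
    have := tendsto_nhds_unique tendsto_const_nhds hlim
    simpa using this
  set u := R⁻¹ *ᵥ vbar with hu
  have hRu : R *ᵥ u = vbar := by
    rw [hu, Matrix.mulVec_mulVec, Matrix.mul_nonsing_inv R (isUnit_iff_ne_zero.mpr hdet),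
      Matrix.one_mulVec]
  have hPu : Pᵀ *ᵥ u = u - vbar := by
    have h1 : (1 - Pᵀ) *ᵥ u = vbar := hR ▸ hRu
    rw [Matrix.sub_mulVec, Matrix.one_mulVec] at h1
    rw [← h1]
    abel
  have hmono : ∀ n (k : Fin d), ((Pᵀ) ^ n *ᵥ u) k ≤ u k := by
    intro n
    induction n with
    | zero => intro k; simp
    | succ n ih =>
      intro k
      have h1 : (Pᵀ) ^ (n + 1) *ᵥ u = (Pᵀ) ^ n *ᵥ (u - vbar) := by
        rw [pow_succ, ← Matrix.mulVec_mulVec, hPu]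
      have h2 : ((Pᵀ) ^ n *ᵥ (u - vbar)) k = ((Pᵀ) ^ n *ᵥ u) k - ((Pᵀ) ^ n *ᵥ vbar) k := by
        rw [Matrix.mulVec_sub]
        rfl
      have h3 : 0 ≤ ((Pᵀ) ^ n *ᵥ vbar) k := by
        rw [hTent]
        exact Finset.sum_nonneg fun l _ => mul_nonneg (hPpow n l k) (hcon l)
      rw [h1, h2]
      linarith [ih k]
  have k0 : Fin d := ⟨0, hd⟩
  have hlim : Tendsto (fun n => ((Pᵀ) ^ n *ᵥ u) k0) atTop (nhds 0) := by
    have := tendsto_finset_sum Finset.univ (fun l (_ : l ∈ Finset.univ) => (hent l k0).mul_const (u l))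
    have h5 : (fun n => ((Pᵀ) ^ n *ᵥ u) k0) = fun n => ∑ l, (P ^ n) l k0 * u l := by
      funext n; exact hTent u k0 n
    rw [h5]
    simpa using this
  have h6 : (0 : ℝ) ≤ u k0 :=
    le_of_tendsto hlim (Filter.Eventually.of_forall fun n => hmono n k0)
  exact absurd (hstab k0) (not_lt.mpr h6)

/-- under the stability condition `R⁻¹ v̄ < 0` (entrywise), there is at least
one coordinate axis whose nonnegative half line intersects `Γ⁻ = {θ : γ θ < 0}` at a point
other than the origin, i.e. `γ (t • e_k) < 0` for some `k` and some `t > 0`. -/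
theorem axis_intersects_GammaMinus (m d : ℕ) (hm : 2 ≤ m) (hd : 2 ≤ d)
    (Q : Matrix (Fin m) (Fin m) ℝ)
    (hQoff : ∀ i j, i ≠ j → 0 ≤ Q i j)
    (hQrow : ∀ i, ∑ j, Q i j = 0)
    (hQirr : ∀ i j : Fin m, i ≠ j → ∃ n : ℕ, ∃ c : Fin (n + 1) → Fin m,
      c 0 = i ∧ c (Fin.last n) = j ∧ ∀ r : Fin n, 0 < Q (c r.castSucc) (c r.succ))
    (v : Fin d → Fin m → ℝ)
    (γ : (Fin d → ℝ) → ℝ)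
    (hγ : ∀ θ : Fin d → ℝ, IsGreatest
      (Complex.re '' spectrum ℂ
        ((Matrix.diagonal (fun i => ∑ k, θ k * v k i) + Q).map Complex.ofReal))
      (γ θ))
    (π : Fin m → ℝ) (hπ0 : ∀ i, 0 ≤ π i) (hπ1 : ∑ i, π i = 1)
    (hπQ : ∀ j, ∑ i, π i * Q i j = 0)
    (vbar : Fin d → ℝ) (hvbar : ∀ k, vbar k = ∑ i, π i * v k i)
    (P : Matrix (Fin d) (Fin d) ℝ) (hP : ∀ k l, 0 ≤ P k l)
    (hPn : Tendsto (fun n => P ^ n) atTop (nhds 0))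
    (R : Matrix (Fin d) (Fin d) ℝ) (hR : R = 1 - Pᵀ)
    (hstab : ∀ k, (R⁻¹ *ᵥ vbar) k < 0) :
    ∃ k : Fin d, ∃ t : ℝ, 0 < t ∧ γ (t • (Pi.single k 1 : Fin d → ℝ)) < 0 := by
  obtain ⟨k, hk⟩ := exists_neg_vbar (by omega) vbar P hP hPn R hR hstab
  have hw : ∑ i, π i * (vbar k - v k i) = 0 := by
    simp only [mul_sub, Finset.sum_sub_distrib]
    rw [← hvbar k, ← Finset.sum_mul, hπ1, one_mul, sub_self]
  obtain ⟨g, hg⟩ := poisson (by omega) Q hQoff hQrow hQirr π hπ1 hπQ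
    (fun i => vbar k - v k i) hw
  set C : ℝ := ∑ i, (|v k i * g i| + |g i|) with hCdef
  have hterm : ∀ i ∈ Finset.univ, (0:ℝ) ≤ |v k i * g i| + |g i| := fun i _ => by positivity
  have hC0 : 0 ≤ C := Finset.sum_nonneg hterm
  have hC1 : ∀ i, |v k i * g i| ≤ C := by
    intro i
    have := Finset.single_le_sum hterm (Finset.mem_univ i)
    have h2 : 0 ≤ |g i| := abs_nonneg _
    rw [← hCdef] at this
    linarith
  have hC2 : ∀ i, |g i| ≤ C := by
    intro i
    have := Finset.single_le_sum hterm (Finset.mem_univ i)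
    have h2 : 0 ≤ |v k i * g i| := abs_nonneg _
    rw [← hCdef] at this
    linarith
  have hCp : (0:ℝ) < 2 * (C + 1) := by linarith
  set t : ℝ := min (-vbar k / (2 * (C + 1))) (1 / (2 * (C + 1))) with htdef
  have ht0 : 0 < t :=
    lt_min (div_pos (neg_pos.mpr hk) hCp) (div_pos one_pos hCp)
  have htC : t * C < 1 / 2 := by
    have h1 : t ≤ 1 / (2 * (C + 1)) := min_le_right _ _
    have h2 : t * C ≤ (1 / (2 * (C + 1))) * C := mul_le_mul_of_nonneg_right h1 hC0
    have h3 : (1 / (2 * (C + 1))) * C < 1 / 2 := by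
      rw [div_mul_eq_mul_div, one_mul, div_lt_div_iff₀ hCp (by norm_num)]
      linarith
    linarith
  have htv : t * C ≤ -vbar k / 2 := by
    have h1 : t ≤ -vbar k / (2 * (C + 1)) := min_le_left _ _
    have h2 : t * C ≤ (-vbar k / (2 * (C + 1))) * C := mul_le_mul_of_nonneg_right h1 hC0
    have h3 : (-vbar k / (2 * (C + 1))) * C ≤ -vbar k / 2 := by
      rw [div_mul_eq_mul_div, div_le_div_iff₀ hCp (by norm_num)]
      nlinarith [neg_pos.mpr hk]
    linarith
  set h : Fin m → ℝ := fun i => 1 + t * g i with hhdef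
  have hh : ∀ i, 0 < h i := by
    intro i
    have h1 : -(t * C) ≤ t * g i := by
      have := neg_abs_le (g i)
      nlinarith [hC2 i, ht0]
    simp only [hhdef]
    linarith
  have hhub : ∀ i, h i ≤ 1 + t * C := by
    intro i
    have := le_abs_self (g i)
    have := hC2 i
    simp only [hhdef]
    nlinarith [ht0]
  set b : ℝ := (t * vbar k / 2) / (1 + t * C) with hbdef
  have h1tC : (0:ℝ) < 1 + t * C := by nlinarith [mul_nonneg ht0.le hC0]
  have hb0 : b < 0 := div_neg_of_neg_of_pos (by nlinarith [ht0]) h1tC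
  set θ : Fin d → ℝ := t • (Pi.single k 1 : Fin d → ℝ) with hθdef
  have hθ : ∀ i, ∑ l, θ l * v l i = t * v k i := by
    intro i
    have : ∀ l, θ l * v l i = if l = k then t * v k i else 0 := by
      intro l
      by_cases hl : l = k <;> simp [hθdef, Pi.single_apply, hl]
    simp only [this]
    simp
  set K := Matrix.diagonal (fun i => ∑ l, θ l * v l i) + Q with hKdef
  have hKoff : ∀ i j, i ≠ j → 0 ≤ K i j := by
    intro i j hij
    have : K i j = Q i j := by
      simp [hKdef, Matrix.add_apply, Matrix.diagonal_apply_ne _ hij]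
    rw [this]
    exact hQoff i j hij
  have hKh : ∀ i, (K *ᵥ h) i ≤ b * h i := by
    intro i
    have h1 : (K *ᵥ h) i = (t * v k i) * h i + (Q *ᵥ h) i := by
      rw [hKdef, Matrix.add_mulVec, Pi.add_apply, Matrix.mulVec_diagonal, hθ]
    have h2 : (Q *ᵥ h) i = t * (vbar k - v k i) := by
      have he : h = (fun _ => 1) + t • g := by
        funext a
        simp [hhdef]
      rw [he, Matrix.mulVec_add, Matrix.mulVec_smul, hg, Pi.add_apply]
      have h3 : (Q *ᵥ (fun _ => 1 : Fin m → ℝ)) i = 0 := by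
        simpa [Matrix.mulVec, dotProduct] using hQrow i
      rw [h3, zero_add]
      simp
    rw [h1, h2]
    have h4 : t * v k i * h i + t * (vbar k - v k i) = t * vbar k + t^2 * (v k i * g i) := by
      simp only [hhdef]
      ring
    rw [h4]
    have h5 : t^2 * (v k i * g i) ≤ t * (-vbar k / 2) := by
      have ha := hC1 i
      have hb := le_abs_self (v k i * g i)
      have : t^2 * (v k i * g i) ≤ t^2 * C := by nlinarith [ht0]
      have h6 : t^2 * C = t * (t * C) := by ring
      nlinarith [ht0, htv]
    have h7 : b * (1 + t * C) = t * vbar k / 2 := div_mul_cancel₀ _ h1tC.ne'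
    have h8 : b * (1 + t * C) ≤ b * h i := mul_le_mul_of_nonpos_left (hhub i) hb0.le
    linarith
  obtain ⟨μ, hμ, hre⟩ := (hγ θ).1
  have hfin := specRe_le K hKoff h hh b hKh hμ
  exact ⟨k, t, ht0, by rw [← hθdef, ← hre] at *; linarith⟩
end

section
/- Let P = (p_{kℓ}) be a d×d entrywise nonnegative real matrix with row sums at most 1, and let w ∈ ℝ^d be a probability vector (w_ℓ ≥ 0, Σ_ℓ w_ℓ = 1). Define the (d+1)×(d+1) matrix P̄, indexed by {0, 1, …, d}, by P̄_{kℓ} = p_{kℓ} for k, ℓ ≥ 1, P̄_{k0} = 1 − Σ_{ℓ=1}^d p_{kℓ} for k ≥ 1, P̄_{00} = 0, and P̄_{0ℓ} = w_ℓ for ℓ ≥ 1. If P̄ is irreducible, i.e., for all i, j ∈ {0, …, d} there exists n ≥ 1 with (P̄^n)_{ij} > 0, then P^n converges entrywise to the zero matrix as n → ∞. -/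
open Matrix Filter

/-- if the stochastic matrix `P̄` obtained from the substochastic routing
matrix `P` by adjoining the outside node `0` (which redistributes input according to `w`)
is irreducible, then the powers `P^n` converge entrywise to the zero matrix. -/
theorem substochastic_powers_tendsto_zero_of_irreducible (d : ℕ) (hd : 2 ≤ d)
    (P : Matrix (Fin d) (Fin d) ℝ) (hP : ∀ k l, 0 ≤ P k l)
    (hProw : ∀ k, ∑ l, P k l ≤ 1)
    (w : Fin d → ℝ) (hw0 : ∀ l, 0 ≤ w l) (hw1 : ∑ l, w l = 1)
    (Pbar : Matrix (Fin (d + 1)) (Fin (d + 1)) ℝ)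
    (hPbar00 : Pbar 0 0 = 0)
    (hPbar0succ : ∀ l : Fin d, Pbar 0 l.succ = w l)
    (hPbarsucc0 : ∀ k : Fin d, Pbar k.succ 0 = 1 - ∑ l, P k l)
    (hPbarsucc : ∀ k l : Fin d, Pbar k.succ l.succ = P k l)
    (hirr : ∀ i j : Fin (d + 1), ∃ n : ℕ, 1 ≤ n ∧ 0 < (Pbar ^ n) i j) :
    Tendsto (fun n => P ^ n) atTop (nhds 0) := by
  haveI : Nonempty (Fin d) := ⟨⟨0, by omega⟩⟩
  -- nonnegativity of powers of P
  have hPn : ∀ n, ∀ k l, 0 ≤ (P ^ n) k l := by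
    intro n
    induction n with
    | zero =>
      intro k l
      simp [Matrix.one_apply]
      split <;> norm_num
    | succ n ih =>
      intro k l
      rw [pow_succ, Matrix.mul_apply]
      exact Finset.sum_nonneg fun j _ => mul_nonneg (ih k j) (hP j l)
  -- nonnegativity of Pbar
  have hPbarnn : ∀ i j, 0 ≤ Pbar i j := by
    intro i j
    induction i using Fin.cases with
    | zero =>
      induction j using Fin.cases with
      | zero => rw [hPbar00]
      | succ l => rw [hPbar0succ]; exact hw0 l
    | succ k =>
      induction j using Fin.cases with
      | zero => rw [hPbarsucc0]; linarith [hProw k]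
      | succ l => rw [hPbarsucc]; exact hP k l
  have hPbarn : ∀ n, ∀ i j, 0 ≤ (Pbar ^ n) i j := by
    intro n
    induction n with
    | zero =>
      intro i j
      simp [Matrix.one_apply]
      split <;> norm_num
    | succ n ih =>
      intro i j
      rw [pow_succ, Matrix.mul_apply]
      exact Finset.sum_nonneg fun t _ => mul_nonneg (ih i t) (hPbarnn t j)
  -- Pbar has row sums one
  have hPbarrow : ∀ i, ∑ j, Pbar i j = 1 := by
    intro i
    induction i using Fin.cases with
    | zero =>
      rw [Fin.sum_univ_succ, hPbar00]
      simp only [hPbar0succ]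
      rw [hw1]; ring
    | succ k =>
      rw [Fin.sum_univ_succ, hPbarsucc0]
      simp only [hPbarsucc]
      ring
  have hPbarnrow : ∀ n, ∀ i, ∑ j, (Pbar ^ n) i j = 1 := by
    intro n
    induction n with
    | zero => intro i; simp [Matrix.one_apply]
    | succ n ih =>
      intro i
      have : ∀ j, (Pbar ^ (n + 1)) i j = ∑ t, (Pbar ^ n) i t * Pbar t j := by
        intro j; rw [pow_succ, Matrix.mul_apply]
      simp only [this]
      rw [Finset.sum_comm]
      have : ∀ t : Fin (d + 1), ∑ j, (Pbar ^ n) i t * Pbar t j = (Pbar ^ n) i t := by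
        intro t
        rw [← Finset.mul_sum, hPbarrow, mul_one]
      simp only [this]
      exact ih i
  -- comparison of powers
  have hcomp : ∀ n, ∀ k l : Fin d, (P ^ n) k l ≤ (Pbar ^ n) k.succ l.succ := by
    intro n
    induction n with
    | zero =>
      intro k l
      by_cases h : k = l
      · subst h; simp [Matrix.one_apply]
      · simp [Matrix.one_apply, h, fun h' => h (Fin.succ_inj.mp h')]
    | succ n ih =>
      intro k l
      rw [pow_succ, pow_succ, Matrix.mul_apply, Matrix.mul_apply,
        Fin.sum_univ_succ]
      have h1 : ∑ j, (P ^ n) k j * P j l ≤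
          ∑ j : Fin d, (Pbar ^ n) k.succ j.succ * Pbar j.succ l.succ := by
        apply Finset.sum_le_sum
        intro j _
        rw [hPbarsucc]
        exact mul_le_mul_of_nonneg_right (ih k j) (hP j l)
      have h2 : 0 ≤ (Pbar ^ n) k.succ 0 * Pbar 0 l.succ :=
        mul_nonneg (hPbarn n _ _) (hPbarnn _ _)
      linarith
  -- row sums of powers of P
  set s : ℕ → Fin d → ℝ := fun n k => ∑ l, (P ^ n) k l with hs
  have hsnn : ∀ n k, 0 ≤ s n k := fun n k =>
    Finset.sum_nonneg fun l _ => hPn n k l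
  have hkey : ∀ m n k, s (m + n) k = ∑ j, (P ^ m) k j * s n j := by
    intro m n k
    simp only [hs, pow_add, Matrix.mul_apply]
    rw [Finset.sum_comm]
    exact Finset.sum_congr rfl fun j _ => (Finset.mul_sum _ _ _).symm
  have hs1 : ∀ n k, s n k ≤ 1 := by
    intro n
    induction n with
    | zero => intro k; simp [hs, Matrix.one_apply]
    | succ n ih =>
      intro k
      have : s (1 + n) k = ∑ j, (P ^ 1) k j * s n j := hkey 1 n k
      rw [Nat.add_comm] at this
      rw [this, pow_one]
      calc ∑ j, P k j * s n j ≤ ∑ j, P k j * 1 :=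
            Finset.sum_le_sum fun j _ =>
              mul_le_mul_of_nonneg_left (ih j) (hP k j)
        _ = ∑ j, P k j := by simp
        _ ≤ 1 := hProw k
  have hanti : ∀ m n k, m ≤ n → s n k ≤ s m k := by
    intro m n k hmn
    obtain ⟨r, rfl⟩ := Nat.exists_eq_add_of_le hmn
    rw [hkey m r k]
    calc ∑ j, (P ^ m) k j * s r j ≤ ∑ j, (P ^ m) k j * 1 :=
          Finset.sum_le_sum fun j _ =>
            mul_le_mul_of_nonneg_left (hs1 r j) (hPn m k j)
      _ = s m k := by simp [hs]
  -- row sum bound via Pbar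
  have hsle : ∀ n k, s n k ≤ 1 - (Pbar ^ n) k.succ 0 := by
    intro n k
    have h1 : s n k ≤ ∑ l : Fin d, (Pbar ^ n) k.succ l.succ :=
      Finset.sum_le_sum fun l _ => hcomp n k l
    have h2 : (Pbar ^ n) k.succ 0 + ∑ l : Fin d, (Pbar ^ n) k.succ l.succ = 1 := by
      rw [← Fin.sum_univ_succ]; exact hPbarnrow n k.succ
    linarith
  -- uniform contraction step
  have hex : ∀ k : Fin d, ∃ n : ℕ, 1 ≤ n ∧ 0 < (Pbar ^ n) k.succ 0 :=
    fun k => hirr k.succ 0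
  choose nf hnf1 hnf2 using hex
  set N : ℕ := Finset.univ.sup nf with hN
  have hNpos : 0 < N := lt_of_lt_of_le (hnf1 (Classical.arbitrary (Fin d)))
    (Finset.le_sup (Finset.mem_univ _))
  have hsN : ∀ k, s N k < 1 := by
    intro k
    have h1 : s N k ≤ s (nf k) k :=
      hanti (nf k) N k (Finset.le_sup (Finset.mem_univ k))
    have h2 := hsle (nf k) k
    have h3 := hnf2 k
    linarith
  set c : ℝ := Finset.univ.sup' Finset.univ_nonempty (s N) with hc
  have hc1 : c < 1 := by
    rw [hc, Finset.sup'_lt_iff]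
    intro k _
    exact hsN k
  have hc0 : 0 ≤ c :=
    le_trans (hsnn N (Classical.arbitrary (Fin d)))
      (Finset.le_sup' _ (Finset.mem_univ _))
  have hcs : ∀ k, s N k ≤ c := fun k => Finset.le_sup' _ (Finset.mem_univ k)
  -- geometric decay along multiples of N
  have hgeo : ∀ m k, s (N * m) k ≤ c ^ m := by
    intro m
    induction m with
    | zero => intro k; simpa using hs1 0 k
    | succ m ih =>
      intro k
      have h1 : s (N + N * m) k = ∑ j, (P ^ N) k j * s (N * m) j := hkey N (N * m) k
      have h2 : N * (m + 1) = N + N * m := by ring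
      rw [h2, h1]
      calc ∑ j, (P ^ N) k j * s (N * m) j ≤ ∑ j, (P ^ N) k j * c ^ m :=
            Finset.sum_le_sum fun j _ =>
              mul_le_mul_of_nonneg_left (ih j) (hPn N k j)
        _ = s N k * c ^ m := by rw [← Finset.sum_mul]
        _ ≤ c * c ^ m :=
            mul_le_mul_of_nonneg_right (hcs k) (pow_nonneg hc0 m)
        _ = c ^ (m + 1) := by ring
  -- conclude
  have hdiv : Tendsto (fun n : ℕ => n / N) atTop atTop := by
    apply tendsto_atTop_atTop.2
    intro b
    refine ⟨b * N, fun n hn => ?_⟩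
    exact (Nat.le_div_iff_mul_le hNpos).2 hn
  have hg : Tendsto (fun n : ℕ => c ^ (n / N)) atTop (nhds 0) :=
    (tendsto_pow_atTop_nhds_zero_of_lt_one hc0 hc1).comp hdiv
  have hentry : ∀ k l : Fin d,
      Tendsto (fun n => (P ^ n) k l) atTop (nhds 0) := by
    intro k l
    apply squeeze_zero (fun n => hPn n k l) _ hg
    intro n
    have h1 : (P ^ n) k l ≤ s n k :=
      Finset.single_le_sum (fun j _ => hPn n k j) (Finset.mem_univ l)
    have h2 : s n k ≤ s (N * (n / N)) k := by
      apply hanti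
      rw [mul_comm]
      exact Nat.div_mul_le_self n N
    have h3 := hgeo (n / N) k
    linarith
  refine tendsto_pi_nhds.2 ?_
  intro k
  rw [tendsto_pi_nhds]
  intro l
  simpa using hentry k l
end
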